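/- Let f : ℝ → ℝ be a 2π-periodic continuously differentiable function with 0 < m ≤ f(λ) ≤ M for all λ, and let f_n : ℝ → ℝ (n ∈ ℕ) be 2π-periodic continuously differentiable functions with C₁ ≤ f_n(λ) ≤ C₂ for all λ and n, where 0 < C₁ < C₂ < ∞. Suppose sup_{λ∈[−π,π]} |f_n(λ) − f(λ)| → 0 and sup_{λ∈[−π,π]} |f_n′(λ) − f′(λ)| → 0 as n → ∞. Then Σ_{k∈ℤ} k² |a_k(log f_n) − a_k(log f)|² → 0 and Σ_{k=1}^∞ |a_k(log f_n) − a_k(log f)| → 0 as n → ∞. -/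

import Mathlib

open MeasureTheory Filter Topology

/-- The `k`-th Fourier coefficient of a (2π-periodic, integrable) function `g : ℝ → ℝ`:
`a_k(g) = (1/(2π)) ∫_{-π}^{π} g(λ) e^{-ikλ} dλ`. -/
noncomputable def fourierCoef (g : ℝ → ℝ) (k : ℤ) : ℂ :=
  (1 / (2 * Real.pi)) *
    ∫ x in (-Real.pi)..Real.pi, (g x : ℂ) * Complex.exp (-Complex.I * (k : ℂ) * (x : ℂ))

namespace Statement8Aux

open Complex Set AddCircle

/-- Complex version of `fourierCoef`. -/
noncomputable def cFC (g : ℝ → ℂ) (k : ℤ) : ℂ :=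
  (1 / (2 * Real.pi)) *
    ∫ x in (-Real.pi)..Real.pi, g x * Complex.exp (-Complex.I * (k : ℂ) * (x : ℂ))

lemma pi_lt : (-Real.pi) < Real.pi := neg_lt_self Real.pi_pos

lemma two_pi_pos : (0:ℝ) < 2 * Real.pi := by positivity

lemma exp_eq (k : ℤ) (x : ℝ) :
    (fourier (-k) (x : AddCircle (Real.pi - -Real.pi)) : ℂ)
      = Complex.exp (-Complex.I * (k : ℂ) * (x : ℂ)) := by
  rw [fourier_coe_apply]
  congr 1
  have h2 : ((Real.pi - -Real.pi : ℝ) : ℂ) = 2 * (Real.pi : ℝ) := by push_cast; ring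
  rw [h2]
  have hπ : ((Real.pi : ℝ) : ℂ) ≠ 0 := Complex.ofReal_ne_zero.mpr Real.pi_pos.ne'
  field_simp
  push_cast; ring

lemma cFC_eq_fourierCoeffOn (g : ℝ → ℂ) (k : ℤ) :
    cFC g k = fourierCoeffOn pi_lt g k := by
  rw [fourierCoeffOn_eq_integral, cFC, real_smul]
  congr 1
  · push_cast; congr 1; ring
  · exact intervalIntegral.integral_congr fun x _ => by
      rw [smul_eq_mul, exp_eq, mul_comm]

lemma cFC_deriv {v v' : ℝ → ℂ} (hv : ∀ x, HasDerivAt v (v' x) x)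
    (hv' : Continuous v') (hper : Function.Periodic v (2 * Real.pi))
    {k : ℤ} (hk : k ≠ 0) :
    cFC v' k = Complex.I * (k : ℂ) * cFC v k := by
  have h := fourierCoeffOn_of_hasDerivAt pi_lt hk (fun x _ => hv x)
    (hv'.intervalIntegrable _ _)
  rw [← cFC_eq_fourierCoeffOn, ← cFC_eq_fourierCoeffOn] at h
  have hvv : v Real.pi - v (-Real.pi) = 0 := by
    have := hper (-Real.pi)
    rw [show -Real.pi + 2 * Real.pi = Real.pi by ring] at this
    rw [this, sub_self]
  rw [hvv, mul_zero, zero_sub] at h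
  have hπ : ((Real.pi : ℝ) : ℂ) ≠ 0 := Complex.ofReal_ne_zero.mpr Real.pi_pos.ne'
  have hkc : (k : ℂ) ≠ 0 := Int.cast_ne_zero.mpr hk
  rw [h]
  have hI : Complex.I ≠ 0 := Complex.I_ne_zero
  field_simp
  push_cast; ring

lemma exp_eq' (k : ℤ) (x : ℝ) :
    (@fourier (2*Real.pi) (-k) (x : AddCircle (2*Real.pi)) : ℂ)
      = Complex.exp (-Complex.I * (k : ℂ) * (x : ℂ)) := by
  rw [fourier_coe_apply]
  congr 1
  have hπ : ((Real.pi : ℝ) : ℂ) ≠ 0 := Complex.ofReal_ne_zero.mpr Real.pi_pos.ne'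
  push_cast
  field_simp

lemma cFC_eq_fourierCoeff (u : ℝ → ℂ) (hper : Function.Periodic u (2*Real.pi)) (k : ℤ) :
    @fourierCoeff (2*Real.pi) ⟨two_pi_pos⟩ _ _ _ (hper.lift) k = cFC u k := by
  haveI : Fact ((0:ℝ) < 2*Real.pi) := ⟨two_pi_pos⟩
  rw [fourierCoeff_eq_intervalIntegral _ _ (-Real.pi), cFC, real_smul]
  have he : -Real.pi + 2*Real.pi = Real.pi := by ring
  rw [he]
  congr 1
  · push_cast; ring
  · exact intervalIntegral.integral_congr fun x _ => by
      rw [smul_eq_mul, exp_eq', Function.Periodic.lift_coe, mul_comm]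

lemma parseval_bound (u : ℝ → ℂ) (hc : Continuous u)
    (hper : Function.Periodic u (2*Real.pi))
    {B : ℝ} (hB : ∀ x ∈ Icc (-Real.pi) Real.pi, ‖u x‖ ≤ B) :
    Summable (fun k : ℤ => ‖cFC u k‖^2) ∧ ∑' k : ℤ, ‖cFC u k‖^2 ≤ B^2 := by
  haveI : Fact ((0:ℝ) < 2*Real.pi) := ⟨two_pi_pos⟩
  have hcont : Continuous hper.lift := by
    rw [(QuotientAddGroup.isQuotientMap_mk _).continuous_iff]
    exact hc
  set F : C(AddCircle (2*Real.pi), ℂ) := ⟨hper.lift, hcont⟩ with hF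
  set hL := ContinuousMap.toLp (E := ℂ) 2 haarAddCircle ℂ F with hLdef
  have hcoef : ∀ k : ℤ, fourierCoeff hL k = cFC u k := by
    intro k
    rw [hLdef, fourierCoeff_toLp]
    exact cFC_eq_fourierCoeff u hper k
  have hsummable : Summable (fun k : ℤ => ‖cFC u k‖^2) := by
    have h1 := (lp.memℓp (fourierBasis.repr hL)).summable
      (by norm_num : 0 < (2 : ENNReal).toReal)
    apply h1.congr
    intro k
    rw [fourierBasis_repr, hcoef k]
    norm_num [Real.rpow_natCast]
  refine ⟨hsummable, ?_⟩
  have hB0 : 0 ≤ B :=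
    le_trans (norm_nonneg (u 0)) (hB 0 ⟨by linarith [Real.pi_pos], Real.pi_pos.le⟩)
  have hptwise : ∀ t : AddCircle (2*Real.pi), ‖hper.lift t‖ ≤ B := by
    intro t
    obtain ⟨b, hb, rfl⟩ := AddCircle.eq_coe_Ico t
    rw [Function.Periodic.lift_coe]
    rcases le_or_gt b Real.pi with h | h
    · exact hB b ⟨by linarith [hb.1, Real.pi_pos], h⟩
    · have : u b = u (b - 2*Real.pi) := by
        have := hper (b - 2*Real.pi)
        rw [show b - 2*Real.pi + 2*Real.pi = b by ring] at this
        exact this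
      rw [this]
      exact hB _ ⟨by linarith [hb.2], by linarith [hb.2, Real.pi_pos]⟩
  have hpar := tsum_sq_fourierCoeff hL
  simp_rw [hcoef] at hpar
  rw [hpar]
  have hae : (fun t => ‖hL t‖^2) =ᵐ[haarAddCircle] (fun t => ‖hper.lift t‖^2) := by
    filter_upwards [ContinuousMap.coeFn_toLp (p := 2) (𝕜 := ℂ) haarAddCircle F] with t ht
    rw [ht]; rfl
  rw [integral_congr_ae hae]
  calc ∫ t, ‖hper.lift t‖^2 ∂haarAddCircle
      ≤ ‖∫ t, ‖hper.lift t‖^2 ∂haarAddCircle‖ := le_abs_self _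
    _ ≤ B^2 * (haarAddCircle univ).toReal := by
        apply norm_integral_le_of_norm_le_const
        filter_upwards with t
        have habs : |‖hper.lift t‖^2| = ‖hper.lift t‖^2 := abs_of_nonneg (sq_nonneg _)
        rw [Real.norm_eq_abs, habs]
        exact pow_le_pow_left₀ (norm_nonneg _) (hptwise t) 2
    _ = B^2 := by rw [measure_univ]; simp

lemma fourierCoef_sub (g h : ℝ → ℝ) (hg : Continuous g) (hh : Continuous h) (k : ℤ) :
    fourierCoef g k - fourierCoef h k = cFC (fun x => ((g x - h x : ℝ) : ℂ)) k := by
  have hint : ∀ q : ℝ → ℝ, Continuous q → IntervalIntegrable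
      (fun x : ℝ => (q x : ℂ) * Complex.exp (-Complex.I * (k : ℂ) * (x : ℂ)))
      MeasureTheory.volume (-Real.pi) Real.pi := by
    intro q hq
    apply Continuous.intervalIntegrable
    fun_prop
  rw [fourierCoef, fourierCoef, cFC, ← mul_sub,
    ← intervalIntegral.integral_sub (hint g hg) (hint h hh)]
  congr 1
  apply intervalIntegral.integral_congr
  intro x _
  push_cast
  ring

lemma periodic_deriv (f : ℝ → ℝ) {c : ℝ} (hf : Function.Periodic f c) :
    Function.Periodic (deriv f) c := by
  intro x
  have h1 : deriv (fun y => f (y + c)) x = deriv f (x + c) := deriv_comp_add_const f c x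
  have h2 : (fun y => f (y + c)) = f := funext hf
  rw [← h1, h2]

lemma amgm {c t n : ℝ} (hc : 0 ≤ c) (ht : 0 < t) (hn : 0 < n) :
    c/n ≤ c^2/(2*t) + t/(2*n^2) := by
  rw [div_add_div _ _ (by positivity) (by positivity),
    div_le_div_iff₀ (by positivity) (by positivity)]
  nlinarith [mul_nonneg hn.le (sq_nonneg (c*n - t)), sq_nonneg (c*n - t),
    mul_pos ht hn, mul_pos (mul_pos ht hn) hn]

end Statement8Aux

open Statement8Aux in
/-- If `f` is 2π-periodic, `C¹` with `0 < m ≤ f ≤ M`, the `f_n` are 2π-periodic, `C¹` with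
`0 < C₁ ≤ f_n ≤ C₂`, and both `f_n → f` and `f_n' → f'` uniformly on `[-π, π]`, then
`∑_{k ∈ ℤ} k² |a_k(log f_n) - a_k(log f)|² → 0` and
`∑_{k=1}^∞ |a_k(log f_n) - a_k(log f)| → 0`. -/
theorem statement8 (f : ℝ → ℝ) (fn : ℕ → ℝ → ℝ) (m M C₁ C₂ : ℝ)
    (hm : 0 < m) (hbound : ∀ x, m ≤ f x ∧ f x ≤ M)
    (hC₁ : 0 < C₁) (hC₁₂ : C₁ < C₂)
    (hnbound : ∀ n x, C₁ ≤ fn n x ∧ fn n x ≤ C₂)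
    (hf_per : Function.Periodic f (2 * Real.pi))
    (hfn_per : ∀ n, Function.Periodic (fn n) (2 * Real.pi))
    (hf_smooth : ContDiff ℝ 1 f) (hfn_smooth : ∀ n, ContDiff ℝ 1 (fn n))
    (hunif : TendstoUniformlyOn fn f atTop (Set.Icc (-Real.pi) Real.pi))
    (hunif' : TendstoUniformlyOn (fun n => deriv (fn n)) (deriv f) atTop
      (Set.Icc (-Real.pi) Real.pi)) :
    Tendsto
      (fun n => ∑' k : ℤ,
        ENNReal.ofReal ((k : ℝ) ^ 2 *
          ‖fourierCoef (fun x => Real.log (fn n x)) k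
            - fourierCoef (fun x => Real.log (f x)) k‖ ^ 2))
      atTop (𝓝 0) ∧
    Tendsto
      (fun n => ∑' k : ℕ,
        ENNReal.ofReal
          ‖fourierCoef (fun x => Real.log (fn n x)) (k + 1)
            - fourierCoef (fun x => Real.log (f x)) (k + 1)‖)
      atTop (𝓝 0) := by
  have hπ := Real.pi_pos
  have hfc : Continuous f := hf_smooth.continuous
  have hfnc : ∀ n, Continuous (fn n) := fun n => (hfn_smooth n).continuous
  have hfpos : ∀ x, 0 < f x := fun x => lt_of_lt_of_le hm (hbound x).1
  have hfnpos : ∀ n x, 0 < fn n x := fun n x => lt_of_lt_of_le hC₁ (hnbound n x).1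
  set u : ℕ → ℝ → ℂ := fun n x => ((Real.log (fn n x) - Real.log (f x) : ℝ) : ℂ) with hu
  set v : ℕ → ℝ → ℂ :=
    fun n x => ((deriv (fn n) x / fn n x - deriv f x / f x : ℝ) : ℂ) with hv
  have hu_der : ∀ n x, HasDerivAt (u n) (v n x) x := by
    intro n x
    have h1 : HasDerivAt (fn n) (deriv (fn n) x) x :=
      ((hfn_smooth n).differentiable one_ne_zero).differentiableAt.hasDerivAt
    have h2 : HasDerivAt f (deriv f x) x :=
      (hf_smooth.differentiable one_ne_zero).differentiableAt.hasDerivAt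
    exact ((h1.log (hfnpos n x).ne').sub (h2.log (hfpos x).ne')).ofReal_comp
  have hu_per : ∀ n, Function.Periodic (u n) (2 * Real.pi) := by
    intro n x; simp only [hu, hfn_per n x, hf_per x]
  have hv_per : ∀ n, Function.Periodic (v n) (2 * Real.pi) := by
    intro n x
    simp only [hv, hfn_per n x, hf_per x, periodic_deriv _ (hfn_per n) x,
      periodic_deriv _ hf_per x]
  have hv_cont : ∀ n, Continuous (v n) := by
    intro n
    exact Complex.continuous_ofReal.comp
      ((((hfn_smooth n).continuous_deriv le_rfl).div (hfnc n)
          fun x => (hfnpos n x).ne').sub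
        ((hf_smooth.continuous_deriv le_rfl).div hfc fun x => (hfpos x).ne'))
  have hdiff : ∀ n k, fourierCoef (fun x => Real.log (fn n x)) k
      - fourierCoef (fun x => Real.log (f x)) k = cFC (u n) k := by
    intro n k
    exact fourierCoef_sub _ _ ((hfnc n).log fun x => (hfnpos n x).ne')
      (hfc.log fun x => (hfpos x).ne') k
  have hrel : ∀ n (k : ℤ), k ≠ 0 → ‖cFC (v n) k‖ = |(k:ℝ)| * ‖cFC (u n) k‖ := by
    intro n k hk
    rw [cFC_deriv (hu_der n) (hv_cont n) (hu_per n) hk]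
    simp [norm_mul, Complex.norm_I]
  have hkey : ∀ ε : ℝ, 0 < ε → ∀ᶠ n in atTop,
      ∀ x ∈ Set.Icc (-Real.pi) Real.pi, ‖v n x‖ ≤ ε := by
    intro ε hε
    obtain ⟨K, hK⟩ := (isCompact_Icc (a := -Real.pi)
      (b := Real.pi)).exists_bound_of_continuousOn
      ((hf_smooth.continuous_deriv le_rfl).continuousOn)
    have hK0 : 0 ≤ K := le_trans (norm_nonneg _) (hK 0 ⟨by linarith, by linarith⟩)
    set ε₂ := C₁ * ε / 2 with hε₂
    set ε₁ := C₁ * m * ε / (2 * (K + 1)) with hε₁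
    have hε₂pos : 0 < ε₂ := by positivity
    have hε₁pos : 0 < ε₁ := by positivity
    filter_upwards [(Metric.tendstoUniformlyOn_iff.mp hunif) ε₁ hε₁pos,
      (Metric.tendstoUniformlyOn_iff.mp hunif') ε₂ hε₂pos] with n hn1 hn2 x hx
    have hb1 : |f x - fn n x| ≤ ε₁ := by
      have := hn1 x hx; rw [Real.dist_eq] at this; exact this.le
    have hb2 : |deriv f x - deriv (fn n) x| ≤ ε₂ := by
      have := hn2 x hx; rw [Real.dist_eq] at this; exact this.le
    have hfx := hfpos x
    have hfnx := hfnpos n x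
    have hEq : deriv (fn n) x / fn n x - deriv f x / f x
        = (deriv (fn n) x - deriv f x) / fn n x
          + deriv f x * (f x - fn n x) / (fn n x * f x) := by
      field_simp
      ring
    have hnorm : ‖v n x‖ = |deriv (fn n) x / fn n x - deriv f x / f x| := by
      show ‖((deriv (fn n) x / fn n x - deriv f x / f x : ℝ) : ℂ)‖ = _
      rw [Complex.norm_real, Real.norm_eq_abs]
    rw [hnorm, hEq]
    have hKx : ‖deriv f x‖ ≤ K := hK x hx
    rw [Real.norm_eq_abs] at hKx
    have hd1 : |deriv (fn n) x - deriv f x| ≤ ε₂ := by rwa [abs_sub_comm]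
    have t1 : |(deriv (fn n) x - deriv f x) / fn n x| ≤ ε₂ / C₁ := by
      rw [abs_div, abs_of_pos hfnx]
      exact div_le_div₀ hε₂pos.le hd1 hC₁ (hnbound n x).1
    have t2 : |deriv f x * (f x - fn n x) / (fn n x * f x)| ≤ K * ε₁ / (C₁ * m) := by
      rw [abs_div, abs_mul, abs_mul, abs_of_pos hfnx, abs_of_pos hfx]
      apply div_le_div₀ (by positivity)
        (mul_le_mul hKx hb1 (abs_nonneg _) hK0) (by positivity)
        (mul_le_mul (hnbound n x).1 (hbound x).1 hm.le (hfnpos n x).le)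
    have e1 : ε₂ / C₁ = ε / 2 := by rw [hε₂]; field_simp
    have e2 : K * ε₁ / (C₁ * m) = K * ε / (2*(K+1)) := by
      rw [hε₁]; field_simp
    have e3 : K * ε / (2*(K+1)) ≤ ε / 2 := by
      rw [div_le_div_iff₀ (by positivity) (by positivity)]
      nlinarith
    calc |(deriv (fn n) x - deriv f x) / fn n x
          + deriv f x * (f x - fn n x) / (fn n x * f x)|
        ≤ |(deriv (fn n) x - deriv f x) / fn n x|
          + |deriv f x * (f x - fn n x) / (fn n x * f x)| := abs_add_le _ _
      _ ≤ ε₂ / C₁ + K * ε₁ / (C₁ * m) := add_le_add t1 t2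
      _ ≤ ε := by rw [e1, e2]; linarith
  constructor
  · rw [ENNReal.tendsto_nhds_zero]
    intro ε hε
    set δ := (min ε 1).toReal with hδ
    have hmin_ne_top : min ε 1 ≠ ⊤ :=
      (lt_of_le_of_lt (min_le_right _ _) ENNReal.one_lt_top).ne
    have hδpos : 0 < δ :=
      ENNReal.toReal_pos (lt_min hε zero_lt_one).ne' hmin_ne_top
    have hδle : ENNReal.ofReal δ ≤ ε := by
      rw [hδ, ENNReal.ofReal_toReal hmin_ne_top]; exact min_le_left _ _
    set ε' := Real.sqrt δ with hε'
    have hε'pos : 0 < ε' := Real.sqrt_pos.mpr hδpos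
    filter_upwards [hkey ε' hε'pos] with n hn
    obtain ⟨hsum, hbd⟩ := parseval_bound (v n) (hv_cont n) (hv_per n) hn
    simp only [hdiff]
    calc ∑' k:ℤ, ENNReal.ofReal ((k:ℝ)^2 * ‖cFC (u n) k‖^2)
        ≤ ∑' k:ℤ, ENNReal.ofReal (‖cFC (v n) k‖^2) := by
          apply ENNReal.tsum_le_tsum
          intro k
          apply ENNReal.ofReal_le_ofReal
          rcases eq_or_ne k 0 with rfl | hk
          · simpa using sq_nonneg ‖cFC (v n) (0:ℤ)‖
          · rw [hrel n k hk, mul_pow, sq_abs]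
      _ = ENNReal.ofReal (∑' k:ℤ, ‖cFC (v n) k‖^2) :=
          (ENNReal.ofReal_tsum_of_nonneg (fun _ => sq_nonneg _) hsum).symm
      _ ≤ ENNReal.ofReal (ε'^2) := ENNReal.ofReal_le_ofReal hbd
      _ = ENNReal.ofReal δ := by rw [hε', Real.sq_sqrt hδpos.le]
      _ ≤ ε := hδle
  · rw [ENNReal.tendsto_nhds_zero]
    intro ε hε
    have hwsum : Summable (fun k : ℕ => 1/((k:ℝ)+1)^2) := by
      have h0 : Summable (fun n : ℕ => 1 / (n:ℝ) ^ 2) :=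
        Real.summable_one_div_nat_pow.mpr one_lt_two
      have h1 := (summable_nat_add_iff 1).mpr h0
      apply h1.congr
      intro k
      push_cast
      ring
    set S := ∑' k:ℕ, 1/((k:ℝ)+1)^2 with hS
    have hSnonneg : 0 ≤ S := tsum_nonneg fun k => by positivity
    set δ := (min ε 1).toReal with hδ
    have hmin_ne_top : min ε 1 ≠ ⊤ :=
      (lt_of_le_of_lt (min_le_right _ _) ENNReal.one_lt_top).ne
    have hδpos : 0 < δ :=
      ENNReal.toReal_pos (lt_min hε zero_lt_one).ne' hmin_ne_top
    have hδle : ENNReal.ofReal δ ≤ ε := by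
      rw [hδ, ENNReal.ofReal_toReal hmin_ne_top]; exact min_le_left _ _
    set t := δ / (2*(S+1)) with ht
    have htpos : 0 < t := by rw [ht]; positivity
    set ε' := Real.sqrt (δ * t) with hε'
    have hε'pos : 0 < ε' := Real.sqrt_pos.mpr (by positivity)
    have hε'sq : ε'^2 = δ * t := Real.sq_sqrt (by positivity)
    filter_upwards [hkey ε' hε'pos] with n hn
    obtain ⟨hsum, hbd⟩ := parseval_bound (v n) (hv_cont n) (hv_per n) hn
    simp only [hdiff]
    have hfirst : (∑' k:ℕ, ENNReal.ofReal (‖cFC (v n) ((k:ℤ)+1)‖^2))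
        ≤ ENNReal.ofReal (ε'^2) := by
      calc (∑' k:ℕ, ENNReal.ofReal (‖cFC (v n) ((k:ℤ)+1)‖^2))
          ≤ ∑' j:ℤ, ENNReal.ofReal (‖cFC (v n) j‖^2) :=
            ENNReal.tsum_comp_le_tsum_of_injective
              (f := fun k:ℕ => (k:ℤ)+1) (fun a b hab => by
                have h : (a:ℤ) + 1 = (b:ℤ) + 1 := hab
                omega) _
        _ = ENNReal.ofReal (∑' j:ℤ, ‖cFC (v n) j‖^2) :=
            (ENNReal.ofReal_tsum_of_nonneg (fun _ => sq_nonneg _) hsum).symm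
        _ ≤ ENNReal.ofReal (ε'^2) := ENNReal.ofReal_le_ofReal hbd
    have hsecond : (∑' k:ℕ, ENNReal.ofReal (1/((k:ℝ)+1)^2)) = ENNReal.ofReal S :=
      (ENNReal.ofReal_tsum_of_nonneg (fun k => by positivity) hwsum).symm
    calc ∑' k:ℕ, ENNReal.ofReal ‖cFC (u n) ((k:ℤ)+1)‖
        ≤ ∑' k:ℕ, (ENNReal.ofReal (‖cFC (v n) ((k:ℤ)+1)‖^2 * (1/(2*t)))
            + ENNReal.ofReal (1/((k:ℝ)+1)^2 * (t/2))) := by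
          apply ENNReal.tsum_le_tsum
          intro k
          rw [← ENNReal.ofReal_add (by positivity) (by positivity)]
          apply ENNReal.ofReal_le_ofReal
          have hk : ((k:ℤ)+1) ≠ 0 := by omega
          have hnormeq : ‖cFC (u n) ((k:ℤ)+1)‖
              = ‖cFC (v n) ((k:ℤ)+1)‖ / ((k:ℝ)+1) := by
            rw [hrel n _ hk]
            have : |(((k:ℤ)+1 : ℤ):ℝ)| = (k:ℝ)+1 := by
              push_cast; rw [abs_of_pos (by positivity)]
            rw [this]
            field_simp
          rw [hnormeq]
          have := amgm (norm_nonneg (cFC (v n) ((k:ℤ)+1))) htpos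
            (by positivity : (0:ℝ) < (k:ℝ)+1)
          calc ‖cFC (v n) ((k:ℤ)+1)‖ / ((k:ℝ)+1)
              ≤ ‖cFC (v n) ((k:ℤ)+1)‖^2/(2*t) + t/(2*((k:ℝ)+1)^2) := this
            _ = ‖cFC (v n) ((k:ℤ)+1)‖^2 * (1/(2*t)) + 1/((k:ℝ)+1)^2 * (t/2) := by
                have hk1 : ((k:ℝ)+1) ≠ 0 := by positivity
                field_simp
      _ = (∑' k:ℕ, ENNReal.ofReal (‖cFC (v n) ((k:ℤ)+1)‖^2)) * ENNReal.ofReal (1/(2*t))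
          + ENNReal.ofReal S * ENNReal.ofReal (t/2) := by
          rw [ENNReal.tsum_add]
          congr 1
          · rw [← ENNReal.tsum_mul_right]
            congr 1
            funext k
            rw [← ENNReal.ofReal_mul (by positivity)]
          · rw [← hsecond, ← ENNReal.tsum_mul_right]
            congr 1
            funext k
            rw [← ENNReal.ofReal_mul (by positivity)]
      _ ≤ ENNReal.ofReal (ε'^2) * ENNReal.ofReal (1/(2*t))
          + ENNReal.ofReal S * ENNReal.ofReal (t/2) := by
          gcongr
      _ = ENNReal.ofReal (ε'^2 * (1/(2*t))) + ENNReal.ofReal (S * (t/2)) := by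
          rw [ENNReal.ofReal_mul (by positivity), ENNReal.ofReal_mul hSnonneg]
      _ ≤ ENNReal.ofReal δ := by
          rw [← ENNReal.ofReal_add (by positivity) (by positivity)]
          apply ENNReal.ofReal_le_ofReal
          rw [hε'sq]
          have h1 : δ * t * (1/(2*t)) = δ/2 := by field_simp
          have h2 : S * (t/2) ≤ δ/4 := by
            have e : S * (t/2) = δ * S / (4*(S+1)) := by rw [ht]; field_simp; ring
            rw [e, div_le_div_iff₀ (by positivity) (by norm_num)]
            nlinarith [mul_nonneg hδpos.le hSnonneg]
          linarith [h1, h2, hδpos]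
      _ ≤ ε := hδle
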